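/- Let $(F,G)$ be a pair of smooth compactly supported functions on a symplectic manifold. With $\rho_{F,G}$ the profile function, for every $\lambda \in (0,1)$ and $c > 0$ one has $\rho_{F,G}(\lambda c) \leq \rho_{F,G}(c) + 2\|F\|_\infty (1-\lambda)$. -/

import Mathlib

open Set

/-- The sup-norm (uniform norm) `‖f‖_∞ = sup_{x ∈ M} |f(x)|` of a function. -/
noncomputable def supNorm {M : Type*} (f : M → ℝ) : ℝ := ⨆ x, |f x|

/-- An abstract model of a symplectic manifold `M`, recording the predicate of being a
smooth function on `M` and the Poisson bracket `{·,·}` on smooth functions, together with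
its basic algebraic properties (ℝ-bilinearity, antisymmetry, and the Leibniz rule). -/
structure PoissonManifold (M : Type*) [TopologicalSpace M] where
  /-- `IsSmooth f` means `f ∈ C^∞(M)`. -/
  IsSmooth : (M → ℝ) → Prop
  /-- The Poisson bracket `{f, g}` associated to the symplectic form. -/
  bracket : (M → ℝ) → (M → ℝ) → M → ℝ
  isSmooth_continuous : ∀ {f}, IsSmooth f → Continuous f
  isSmooth_const : ∀ c : ℝ, IsSmooth (fun _ => c)
  isSmooth_add : ∀ {f g}, IsSmooth f → IsSmooth g → IsSmooth (f + g)
  isSmooth_mul : ∀ {f g}, IsSmooth f → IsSmooth g → IsSmooth (f * g)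
  isSmooth_smul : ∀ (c : ℝ) {f}, IsSmooth f → IsSmooth (c • f)
  isSmooth_bracket : ∀ {f g}, IsSmooth f → IsSmooth g → IsSmooth (bracket f g)
  bracket_add_left : ∀ f g h, bracket (f + g) h = bracket f h + bracket g h
  bracket_smul_left : ∀ (c : ℝ) f g, bracket (c • f) g = c • bracket f g
  bracket_antisymm : ∀ f g, bracket f g = - bracket g f
  bracket_leibniz : ∀ f g h, bracket (f * g) h = f * bracket g h + g * bracket f h

/-- The set `𝒦_s` of pairs of smooth compactly supported functions `(H,K)` with
`‖{H,K}‖_∞ ≤ s`, as a predicate. -/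
def inKs {M : Type*} [TopologicalSpace M] (P : PoissonManifold M) (s : ℝ)
    (H K : M → ℝ) : Prop :=
  P.IsSmooth H ∧ HasCompactSupport H ∧ P.IsSmooth K ∧ HasCompactSupport K ∧
    supNorm (P.bracket H K) ≤ s

/-- The profile function `ρ_{F,G}(s) = dist((F,G), 𝒦_s)` in the uniform distance
`d((F,G),(H,K)) = ‖F-H‖_∞ + ‖G-K‖_∞`. -/
noncomputable def profileFn {M : Type*} [TopologicalSpace M] (P : PoissonManifold M)
    (F G : M → ℝ) (s : ℝ) : ℝ :=
  sInf {d : ℝ | ∃ H K : M → ℝ, inKs P s H K ∧ d = supNorm (F - H) + supNorm (G - K)}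

lemma supNorm_nonneg' {M : Type*} (f : M → ℝ) : 0 ≤ supNorm f :=
  Real.iSup_nonneg fun _ => abs_nonneg _

lemma le_supNorm' {M : Type*} [TopologicalSpace M] {f : M → ℝ}
    (hf : Continuous f) (hfc : HasCompactSupport f) (x : M) : |f x| ≤ supNorm f := by
  obtain ⟨C, hC⟩ := hf.bounded_above_of_compact_support hfc
  exact le_ciSup ⟨C, by rintro y ⟨x, rfl⟩; exact hC x⟩ x

lemma supNorm_le' {M : Type*} {f : M → ℝ} {a : ℝ} (ha : 0 ≤ a) (h : ∀ x, |f x| ≤ a) :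
    supNorm f ≤ a := Real.iSup_le h ha

lemma supNorm_smul' {M : Type*} (a : ℝ) (ha : 0 ≤ a) (f : M → ℝ) :
    supNorm (a • f) = a * supNorm f := by
  unfold supNorm
  rw [Real.mul_iSup_of_nonneg ha]
  congr 1; funext x
  simp [abs_mul, abs_of_nonneg ha]

lemma bracket_zero_left {M : Type*} [TopologicalSpace M] (P : PoissonManifold M)
    (K : M → ℝ) : P.bracket 0 K = 0 := by
  have h := P.bracket_smul_left 0 0 K
  simpa using h

/-- For smooth compactly supported `F, G`, every `λ ∈ (0,1)` and `c > 0`: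
`ρ_{F,G}(λc) ≤ ρ_{F,G}(c) + 2‖F‖_∞(1-λ)`. -/
theorem profile_rescaling_estimate
    {M : Type*} [TopologicalSpace M] (P : PoissonManifold M)
    (F G : M → ℝ) (hF : P.IsSmooth F) (hFc : HasCompactSupport F)
    (hG : P.IsSmooth G) (hGc : HasCompactSupport G)
    (lam c : ℝ) (hlam : lam ∈ Ioo (0:ℝ) 1) (hc : 0 < c) :
    profileFn P F G (lam * c) ≤ profileFn P F G c + 2 * supNorm F * (1 - lam) := by
  obtain ⟨hlam0, hlam1⟩ := hlam
  set T : ℝ := 2 * supNorm F * (1 - lam) with hT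
  have hTnn : 0 ≤ T := by
    have := supNorm_nonneg' F
    have : (0:ℝ) ≤ 2 * supNorm F := by linarith
    nlinarith
  set S : ℝ → Set ℝ := fun s =>
    {d : ℝ | ∃ H K : M → ℝ, inKs P s H K ∧ d = supNorm (F - H) + supNorm (G - K)} with hS
  have hprof : ∀ s, profileFn P F G s = sInf (S s) := fun s => rfl
  -- the zero pair lies in every 𝒦_s with s ≥ 0
  have hzero : ∀ s : ℝ, 0 ≤ s → ∀ K : M → ℝ, P.IsSmooth K → HasCompactSupport K →
      inKs P s (0 : M → ℝ) K := by
    intro s hs K hK hKc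
    refine ⟨by simpa [Pi.zero_def] using P.isSmooth_const 0, by
      simpa using (HasCompactSupport.zero : HasCompactSupport (0 : M → ℝ)), hK, hKc, ?_⟩
    rw [bracket_zero_left]
    have : supNorm (0 : M → ℝ) = 0 := by
      refine le_antisymm (supNorm_le' le_rfl fun x => by simp) (supNorm_nonneg' _)
    rw [this]; exact hs
  have hbdd : ∀ s, BddBelow (S s) := by
    intro s
    refine ⟨0, ?_⟩
    rintro d ⟨H, K, _, rfl⟩
    have := supNorm_nonneg' (F - H); have := supNorm_nonneg' (G - K); linarith
  have hne : (S c).Nonempty := by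
    exact ⟨supNorm (F - 0) + supNorm (G - 0), 0, 0,
      hzero c hc.le 0 (by simpa [Pi.zero_def] using P.isSmooth_const 0)
        (by simpa using (HasCompactSupport.zero : HasCompactSupport (0 : M → ℝ))), rfl⟩
  -- key claim: for every d ∈ S c, profileFn (lam*c) ≤ d + T
  have key : ∀ d ∈ S c, profileFn P F G (lam * c) ≤ d + T := by
    rintro d ⟨H, K, ⟨hH, hHc, hK, hKc, hbr⟩, rfl⟩
    have hFH : Continuous (F - H) := (P.isSmooth_continuous hF).sub (P.isSmooth_continuous hH)
    have hFHc : HasCompactSupport (F - H) := by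
      rw [sub_eq_add_neg]; exact hFc.add hHc.neg
    have hHcont : Continuous H := P.isSmooth_continuous hH
    by_cases hcase : supNorm (F - H) ≤ supNorm F
    · -- use (lam • H, K)
      have hmem : inKs P (lam * c) (lam • H) K := by
        refine ⟨P.isSmooth_smul lam hH, hHc.smul_left, hK, hKc, ?_⟩
        rw [P.bracket_smul_left, supNorm_smul' lam hlam0.le]
        exact mul_le_mul_of_nonneg_left hbr hlam0.le
      have hd' : supNorm (F - lam • H) + supNorm (G - K) ∈ S (lam * c) :=
        ⟨lam • H, K, hmem, rfl⟩
      have hle : profileFn P F G (lam * c) ≤ supNorm (F - lam • H) + supNorm (G - K) := by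
        rw [hprof]; exact csInf_le (hbdd _) hd'
      -- bound supNorm (F - lam • H)
      have hHb : supNorm H ≤ 2 * supNorm F := by
        refine supNorm_le' (by have := supNorm_nonneg' F; linarith) fun x => ?_
        have h1 : |F x - H x| ≤ supNorm (F - H) := by
          simpa using le_supNorm' hFH hFHc x
        have h2 : |F x| ≤ supNorm F := le_supNorm' (P.isSmooth_continuous hF) hFc x
        have hx : H x = F x - (F x - H x) := by ring
        have h3 : |H x| ≤ |F x| + |F x - H x| := by
          calc |H x| = |F x - (F x - H x)| := by rw [← hx]
            _ ≤ |F x| + |F x - H x| := abs_sub (F x) (F x - H x)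
        linarith
      have hbound : supNorm (F - lam • H) ≤ supNorm (F - H) + T := by
        refine supNorm_le' (by have := supNorm_nonneg' (F - H); linarith) fun x => ?_
        have h1 : |F x - H x| ≤ supNorm (F - H) := by
          simpa using le_supNorm' hFH hFHc x
        have h2 : |H x| ≤ supNorm H := le_supNorm' hHcont hHc x
        have : |F x - lam * H x| ≤ |F x - H x| + (1 - lam) * |H x| := by
          have : F x - lam * H x = (F x - H x) + (1 - lam) * H x := by ring
          rw [this]
          refine (abs_add_le _ _).trans ?_
          rw [abs_mul, abs_of_nonneg (by linarith : (0:ℝ) ≤ 1 - lam)]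
        calc |(F - lam • H) x| = |F x - lam * H x| := by simp [Pi.smul_apply, smul_eq_mul]
          _ ≤ |F x - H x| + (1 - lam) * |H x| := this
          _ ≤ supNorm (F - H) + (1 - lam) * (2 * supNorm F) := by
              refine add_le_add h1 ?_
              exact mul_le_mul_of_nonneg_left (h2.trans hHb) (by linarith)
          _ = supNorm (F - H) + T := by rw [hT]; ring
      linarith
    · -- use (0, K)
      push_neg at hcase
      have hmem : inKs P (lam * c) (0 : M → ℝ) K :=
        hzero _ (by positivity) K hK hKc
      have hd' : supNorm (F - 0) + supNorm (G - K) ∈ S (lam * c) := ⟨0, K, hmem, rfl⟩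
      have hle : profileFn P F G (lam * c) ≤ supNorm (F - 0) + supNorm (G - K) := by
        rw [hprof]; exact csInf_le (hbdd _) hd'
      have : supNorm (F - 0) = supNorm F := by simp
      rw [this] at hle
      linarith [hcase.le]
  -- conclude
  have : profileFn P F G (lam * c) - T ≤ sInf (S c) := by
    refine le_csInf hne fun d hd => ?_
    have := key d hd; linarith
  have h2 : profileFn P F G c = sInf (S c) := hprof c
  linarith
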